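/- For all integers n ≥ m ≥ 1 one has P(m,n) = ∑_{ν=0}^{m−1} ∑_{μ=0}^{m−1} (n²/(n+ν−μ)²) · C(n+ν,ν) · C(n−1,μ) · C(n+m−1−μ, m−1−μ) · C(n−1, m−1−ν), where all denominators n+ν−μ are nonzero; in particular, P(m,n) is a natural number for all n ≥ m ≥ 1. -/

import Mathlib

/-- The polynomial `t(ν,μ,m;x) = ∏_{k=1}^{μ}(x+ν−μ+k) · ∏_{l=1}^{ν}(x−1−μ+l)` (independent of `m`). -/
noncomputable def tPoly (ν μ : ℕ) : Polynomial ℚ :=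
  (∏ k ∈ Finset.range μ, (Polynomial.X + Polynomial.C ((ν : ℚ) - (μ : ℚ) + (k : ℚ) + 1))) *
  (∏ l ∈ Finset.range ν, (Polynomial.X + Polynomial.C ((l : ℚ) - (μ : ℚ))))

/-- `P(m,x) = ∑_{ν,μ=0}^{m−1} t(ν,μ,m;x)·t(m−1−μ,m−1−ν,m;x)/(ν!(m−1−ν)!μ!(m−1−μ)!)`, with `P(0,x)=0`. -/
noncomputable def Ppoly (m : ℕ) : Polynomial ℚ :=
  ∑ ν ∈ Finset.range m, ∑ μ ∈ Finset.range m,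
    Polynomial.C (((ν.factorial : ℚ) * ((m - 1 - ν).factorial : ℚ) *
        (μ.factorial : ℚ) * ((m - 1 - μ).factorial : ℚ))⁻¹) *
      (tPoly ν μ * tPoly (m - 1 - μ) (m - 1 - ν))


lemma prodNat (a b : ℕ) :
    ∏ k ∈ Finset.range b, (a + k + 1) = b.factorial * (a + b).choose b := by
  induction b with
  | zero => simp
  | succ b ih =>
    rw [Finset.prod_range_succ, ih]
    have h := Nat.add_one_mul_choose_eq (a + b) b
    simp -failIfUnchanged only [Nat.succ_eq_add_one] at h
    calc b.factorial * (a + b).choose b * (a + b + 1)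
        = b.factorial * ((a + b + 1) * (a + b).choose b) := by ring
      _ = b.factorial * ((a + b + 1).choose (b + 1) * (b + 1)) := by rw [h]
      _ = (b+1).factorial * (a + (b+1)).choose (b+1) := by
          rw [Nat.factorial_succ]; ring_nf

lemma tPoly_eval (ν μ n : ℕ) (h : μ < n) :
    (tPoly ν μ).eval (n : ℚ) =
      ((μ.factorial * (n + ν).choose μ * (ν.factorial * (n - μ - 1 + ν).choose ν) : ℕ) : ℚ) := by
  obtain ⟨a, rfl⟩ : ∃ a, n = μ + 1 + a := ⟨n - μ - 1, by omega⟩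
  have e1 : ∀ k ∈ Finset.range μ,
      Polynomial.eval ((μ + 1 + a : ℕ) : ℚ) (Polynomial.X + Polynomial.C ((ν : ℚ) - μ + k + 1))
      = (((ν + a + 1) + k + 1 : ℕ) : ℚ) := by
    intro k _; simp only [Polynomial.eval_add, Polynomial.eval_X, Polynomial.eval_C]
    push_cast; ring
  have e2 : ∀ l ∈ Finset.range ν,
      Polynomial.eval ((μ + 1 + a : ℕ) : ℚ) (Polynomial.X + Polynomial.C ((l : ℚ) - μ))
      = ((a + l + 1 : ℕ) : ℚ) := by
    intro l _; simp only [Polynomial.eval_add, Polynomial.eval_X, Polynomial.eval_C]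
    push_cast; ring
  rw [tPoly, Polynomial.eval_mul, Polynomial.eval_prod, Polynomial.eval_prod,
    Finset.prod_congr rfl e1, Finset.prod_congr rfl e2, ← Nat.cast_prod, ← Nat.cast_prod,
    prodNat, prodNat, ← Nat.cast_mul]
  congr 2
  · congr 2; omega
  · congr 2 <;> omega

lemma term_key (m n ν μ : ℕ) (hm : 1 ≤ m) (hmn : m ≤ n) (hν : ν < m) (hμ : μ < m) :
    (((n + ν).choose μ : ℚ)) * ((n - μ - 1 + ν).choose ν : ℚ) *
      ((n + (m - 1 - μ)).choose (m - 1 - ν) : ℚ) *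
      ((n - (m - 1 - ν) - 1 + (m - 1 - μ)).choose (m - 1 - μ) : ℚ) =
    (n : ℚ) ^ 2 / ((n : ℚ) + (ν : ℚ) - (μ : ℚ)) ^ 2 *
      ((n + ν).choose ν : ℚ) * ((n - 1).choose μ : ℚ) *
      ((n + m - 1 - μ).choose (m - 1 - μ) : ℚ) * ((n - 1).choose (m - 1 - ν) : ℚ) := by
  obtain ⟨c, hc⟩ : ∃ c, m = ν + 1 + c := ⟨m - ν - 1, by omega⟩
  obtain ⟨d, hd⟩ : ∃ d, m = μ + 1 + d := ⟨m - μ - 1, by omega⟩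
  obtain ⟨e, he⟩ : ∃ e, n = m + e := ⟨n - m, by omega⟩
  have hn : n = μ + d + e + 1 := by omega
  have hn' : n = ν + c + e + 1 := by omega
  have A2 : m - 1 - μ = d := by omega
  have A3 : m - 1 - ν = c := by omega
  have A1 : n - μ - 1 + ν = ν + d + e := by omega
  have A4 : n - c - 1 + d = ν + d + e := by omega
  have A5 : n + m - 1 - μ = n + d := by omega
  have A6 : n - 1 = μ + d + e := by omega
  rw [A2, A3, A1, A4, A5, A6]
  have h1 : μ ≤ n + ν := by omega
  have h2 : ν ≤ ν + d + e := by omega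
  have h3 : c ≤ n + d := by omega
  have h4 : d ≤ ν + d + e := by omega
  have h5 : ν ≤ n + ν := by omega
  have h6 : μ ≤ μ + d + e := by omega
  have h7 : d ≤ n + d := by omega
  have h8 : c ≤ μ + d + e := by omega
  rw [Nat.cast_choose ℚ h1, Nat.cast_choose ℚ h2, Nat.cast_choose ℚ h3,
    Nat.cast_choose ℚ h4, Nat.cast_choose ℚ h5, Nat.cast_choose ℚ h6,
    Nat.cast_choose ℚ h7, Nat.cast_choose ℚ h8]
  have B1 : n + ν - μ = ν + d + e + 1 := by omega
  have B2 : ν + d + e - ν = d + e := by omega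
  have B3 : n + d - c = ν + d + e + 1 := by omega
  have B4 : ν + d + e - d = ν + e := by omega
  have B5 : n + ν - ν = n := by omega
  have B6 : μ + d + e - μ = d + e := by omega
  have B7 : n + d - d = n := by omega
  have B8 : μ + d + e - c = ν + e := by omega
  rw [B1, B2, B3, B4, B5, B6, B7, B8]
  have F1 : ((ν + d + e + 1).factorial : ℚ)
      = ((ν + d + e + 1 : ℕ) : ℚ) * ((ν + d + e).factorial : ℚ) := by
    exact_mod_cast congrArg (Nat.cast (R := ℚ)) (Nat.factorial_succ (ν + d + e))
  have F2 : (n.factorial : ℚ) = (n : ℚ) * ((μ + d + e).factorial : ℚ) := by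
    rw [hn]; exact_mod_cast congrArg (Nat.cast (R := ℚ)) (Nat.factorial_succ (μ + d + e))
  have hq : (n : ℚ) + (ν : ℚ) - (μ : ℚ) = ((ν + d + e + 1 : ℕ) : ℚ) := by
    rw [hn]; push_cast; ring
  rw [F1, F2, hq]
  have hfac : ∀ k : ℕ, ((k.factorial : ℚ)) ≠ 0 := fun k => Nat.cast_ne_zero.2 k.factorial_ne_zero
  have hq0 : ((ν + d + e + 1 : ℕ) : ℚ) ≠ 0 := by positivity
  have hn0 : (n : ℚ) ≠ 0 := by rw [hn]; positivity
  field_simp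

/-- For `n ≥ m ≥ 1`:
`P(m,n) = ∑_{ν,μ=0}^{m−1} (n²/(n+ν−μ)²)·C(n+ν,ν)·C(n−1,μ)·C(n+m−1−μ,m−1−μ)·C(n−1,m−1−ν)`,
all denominators being nonzero; in particular `P(m,n)` is a natural number. -/
theorem stmt3 : ∀ m n : ℕ, 1 ≤ m → m ≤ n →
    (∀ ν μ : ℕ, ν < m → μ < m → ((n : ℚ) + (ν : ℚ) - (μ : ℚ)) ≠ 0) ∧
    (Ppoly m).eval (n : ℚ) =
      (∑ ν ∈ Finset.range m, ∑ μ ∈ Finset.range m,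
        (n : ℚ) ^ 2 / ((n : ℚ) + (ν : ℚ) - (μ : ℚ)) ^ 2 *
          ((n + ν).choose ν : ℚ) * ((n - 1).choose μ : ℚ) *
          ((n + m - 1 - μ).choose (m - 1 - μ) : ℚ) * ((n - 1).choose (m - 1 - ν) : ℚ)) ∧
    (∃ N : ℕ, (Ppoly m).eval (n : ℚ) = (N : ℚ)) := by
  intro m n hm hmn
  have hden : ∀ ν μ : ℕ, ν < m → μ < m → ((n : ℚ) + (ν : ℚ) - (μ : ℚ)) ≠ 0 := by
    intro ν μ hν hμ
    have hμn : (μ : ℚ) < (n : ℚ) := by exact_mod_cast (by omega : μ < n)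
    have hν0 : (0 : ℚ) ≤ (ν : ℚ) := Nat.cast_nonneg ν
    exact ne_of_gt (by linarith)
  have hEval : (Ppoly m).eval (n : ℚ) =
      ∑ ν ∈ Finset.range m, ∑ μ ∈ Finset.range m,
        (((n + ν).choose μ * (n - μ - 1 + ν).choose ν *
          ((n + (m - 1 - μ)).choose (m - 1 - ν) *
            (n - (m - 1 - ν) - 1 + (m - 1 - μ)).choose (m - 1 - μ)) : ℕ) : ℚ) := by
    rw [Ppoly, Polynomial.eval_finset_sum]
    refine Finset.sum_congr rfl fun ν hν => ?_
    rw [Polynomial.eval_finset_sum]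
    refine Finset.sum_congr rfl fun μ hμ => ?_
    simp only [Finset.mem_range] at hν hμ
    rw [Polynomial.eval_mul, Polynomial.eval_C, Polynomial.eval_mul,
      tPoly_eval ν μ n (by omega), tPoly_eval (m - 1 - μ) (m - 1 - ν) n (by omega)]
    have f1 : ((ν.factorial : ℚ)) ≠ 0 := Nat.cast_ne_zero.2 ν.factorial_ne_zero
    have f2 : (((m - 1 - ν).factorial : ℚ)) ≠ 0 := Nat.cast_ne_zero.2 (m - 1 - ν).factorial_ne_zero
    have f3 : ((μ.factorial : ℚ)) ≠ 0 := Nat.cast_ne_zero.2 μ.factorial_ne_zero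
    have f4 : (((m - 1 - μ).factorial : ℚ)) ≠ 0 := Nat.cast_ne_zero.2 (m - 1 - μ).factorial_ne_zero
    push_cast
    field_simp
  refine ⟨hden, ?_, ?_⟩
  · rw [hEval]
    refine Finset.sum_congr rfl fun ν hν => Finset.sum_congr rfl fun μ hμ => ?_
    simp only [Finset.mem_range] at hν hμ
    push_cast
    have := term_key m n ν μ hm hmn hν hμ
    linarith [this]
  · refine ⟨∑ ν ∈ Finset.range m, ∑ μ ∈ Finset.range m,
      ((n + ν).choose μ * (n - μ - 1 + ν).choose ν *
        ((n + (m - 1 - μ)).choose (m - 1 - ν) *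
          (n - (m - 1 - ν) - 1 + (m - 1 - μ)).choose (m - 1 - μ))), ?_⟩
    rw [hEval]
    push_cast
    rfl
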